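/- Let u ∈ H^s(ℝ^{2n}; ℝ^{2n}) with s > n + 1 satisfy the symplectic condition ω^T·du = (du)^T·ω. Then the symplectic divergence of the convective term satisfies ∇_ω · [(u·∇)u] = (u·∇)(∇_ω · u); in particular the trace term tr(ω · (du)^T · (du)^T) vanishes. -/

import Mathlib

open MeasureTheory Real Complex Filter Finset Metric Function
open scoped FourierTransform ENNReal Topology NNReal RealInnerProductSpace

noncomputable section

/-- Euclidean space `ℝ^m`. -/
abbrev Euc (m : ℕ) := EuclideanSpace ℝ (Fin m)

/-- The `H^s` Sobolev "norm" (valued in `ℝ≥0∞`), defined via the Fourier transform. -/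
def sobNorm {m : ℕ} (s : ℝ) (f : Euc m → ℂ) : ℝ≥0∞ :=
  (∫⁻ ξ, ENNReal.ofReal ((1 + ‖ξ‖ ^ 2) ^ s) * (‖𝓕 f ξ‖₊ : ℝ≥0∞) ^ 2) ^ (1 / 2 : ℝ)

/-- Sobolev norm of a real-valued function. -/
def sobNormR {m : ℕ} (s : ℝ) (f : Euc m → ℝ) : ℝ≥0∞ :=
  sobNorm s (fun x => (f x : ℂ))

/-- Sobolev norm of a vector field, componentwise. -/
def sobNormV {m : ℕ} (s : ℝ) (u : Euc m → Euc m) : ℝ≥0∞ :=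
  ∑ i : Fin m, sobNormR s (fun x => u x i)

/-- Partial derivative `∂_i f`. -/
def pd {m : ℕ} {F : Type*} [NormedAddCommGroup F] [NormedSpace ℝ F]
    (i : Fin m) (f : Euc m → F) (x : Euc m) : F :=
  fderiv ℝ f x (EuclideanSpace.single i 1)
open Matrix

/-- The standard symplectic matrix on `ℝ^{2n}`: block diagonal with blocks `[[0,1],[-1,0]]`. -/
def ωmat (n : ℕ) : Matrix (Fin (2 * n)) (Fin (2 * n)) ℝ := fun i j =>
  if i.val % 2 = 0 ∧ j.val = i.val + 1 then 1
  else if j.val % 2 = 0 ∧ i.val = j.val + 1 then -1 else 0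

/-- The Jacobian matrix `Du(x) = (∂_j u_i(x))`. -/
def jac {n : ℕ} (u : Euc (2 * n) → Euc (2 * n)) (x : Euc (2 * n)) :
    Matrix (Fin (2 * n)) (Fin (2 * n)) ℝ := fun i j =>
  pd j (fun y => u y i) x

/-- `u` is a symplectic vector field: `P(u) = ωᵀ·Du − (Du)ᵀ·ω = 0`
(the coordinate form of `L_u ω = 0`). -/
def IsSymp (n : ℕ) (u : Euc (2 * n) → Euc (2 * n)) : Prop :=
  ∀ x, (ωmat n)ᵀ * jac u x = (jac u x)ᵀ * ωmat n

/-- The symplectic divergence `∇_ω·u = ∂₂u₁ − ∂₁u₂ + … + ∂_{2n}u_{2n−1} − ∂_{2n−1}u_{2n}`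
(written here with 0-based indices). -/
def sympDiv (n : ℕ) (u : Euc (2 * n) → Euc (2 * n)) (x : Euc (2 * n)) : ℝ :=
  ∑ i : Fin n,
    (pd ⟨2 * i.val + 1, by have := i.isLt; omega⟩
        (fun y => u y ⟨2 * i.val, by have := i.isLt; omega⟩) x
      - pd ⟨2 * i.val, by have := i.isLt; omega⟩
        (fun y => u y ⟨2 * i.val + 1, by have := i.isLt; omega⟩) x)

/-- The symplectic gradient `∇_ω H = (∂₂H, −∂₁H, …, ∂_{2n}H, −∂_{2n−1}H)`. -/
def sympGrad (n : ℕ) (H : Euc (2 * n) → ℝ) (x : Euc (2 * n)) : Euc (2 * n) :=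
  (EuclideanSpace.equiv (Fin (2 * n)) ℝ).symm fun j =>
    if h : j.val % 2 = 0 then pd ⟨j.val + 1, by have := j.isLt; omega⟩ H x
    else -pd ⟨j.val - 1, by have := j.isLt; omega⟩ H x

/-- The convective term `(u·∇)u`, with components `Σ_k u_k ∂_k u_j`. -/
def convect {n : ℕ} (u : Euc (2 * n) → Euc (2 * n)) (x : Euc (2 * n)) : Euc (2 * n) :=
  (EuclideanSpace.equiv (Fin (2 * n)) ℝ).symm fun j =>
    ∑ k : Fin (2 * n), u x k * pd k (fun y => u y j) x


lemma pd_mul {m : ℕ} (i : Fin m) (f g : Euc m → ℝ) (x : Euc m)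
    (hf : DifferentiableAt ℝ f x) (hg : DifferentiableAt ℝ g x) :
    pd i (fun y => f y * g y) x = pd i f x * g x + f x * pd i g x := by
  simp only [pd, fderiv_fun_mul hf hg]
  simp [mul_comm]
  ring

lemma pd_sum {m : ℕ} {ι : Type*} (t : Finset ι) (i : Fin m) (f : ι → Euc m → ℝ) (x : Euc m)
    (hf : ∀ j ∈ t, DifferentiableAt ℝ (f j) x) :
    pd i (fun y => ∑ j ∈ t, f j y) x = ∑ j ∈ t, pd i (f j) x := by
  simp only [pd, fderiv_fun_sum hf]
  simp

lemma pd_sub {m : ℕ} (i : Fin m) (f g : Euc m → ℝ) (x : Euc m)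
    (hf : DifferentiableAt ℝ f x) (hg : DifferentiableAt ℝ g x) :
    pd i (fun y => f y - g y) x = pd i f x - pd i g x := by
  simp only [pd, fderiv_fun_sub hf hg]; simp

lemma pd_swap {m : ℕ} (f : Euc m → ℝ) (hf : ContDiff ℝ 2 f) (i j : Fin m) (x : Euc m) :
    pd i (pd j f) x = pd j (pd i f) x := by
  have hd1 : Differentiable ℝ f := hf.differentiable (by norm_num)
  have hd2 : Differentiable ℝ (fderiv ℝ f) :=
    (hf.fderiv_right (m := 1) (by norm_num)).differentiable (by norm_num)
  have key : ∀ a b : Fin m, pd a (pd b f) x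
      = fderiv ℝ (fderiv ℝ f) x (EuclideanSpace.single a 1) (EuclideanSpace.single b 1) := by
    intro a b
    simp only [pd]
    have hb : (fun y => (fderiv ℝ f y) (EuclideanSpace.single b 1))
        = pd b f := rfl
    rw [← hb, fderiv_clm_apply (hd2 x) (differentiableAt_const (EuclideanSpace.single b 1))]
    simp
  have symm : IsSymmSndFDerivAt ℝ f x := (hf.contDiffAt).isSymmSndFDerivAt (by norm_num)
  rw [key, key, symm]

lemma omega_sq (n : ℕ) : ωmat n * ωmat n = -1 := by
  ext i j
  rw [Matrix.mul_apply]
  rcases Nat.even_or_odd i.val with he | ho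
  · have he' : i.val % 2 = 0 := Nat.even_iff.mp he
    have hlt : i.val + 1 < 2 * n := by have := i.isLt; omega
    rw [Finset.sum_eq_single (⟨i.val + 1, hlt⟩ : Fin (2 * n))]
    · simp only [ωmat, Matrix.neg_apply, Matrix.one_apply, Fin.ext_iff]
      split_ifs <;> (try norm_num) <;> (try simp only [and_true, true_and, not_true, not_false_iff] at *) <;> omega
    · intro b _ hb
      have hbv : b.val ≠ i.val + 1 := fun h => hb (Fin.ext h)
      simp only [ωmat]
      split_ifs <;> (try norm_num) <;> (try simp only [and_true, true_and, not_true, not_false_iff] at *) <;> omega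
    · simp
  · have ho' : i.val % 2 = 1 := Nat.odd_iff.mp ho
    have hlt : i.val - 1 < 2 * n := by have := i.isLt; omega
    rw [Finset.sum_eq_single (⟨i.val - 1, hlt⟩ : Fin (2 * n))]
    · simp only [ωmat, Matrix.neg_apply, Matrix.one_apply, Fin.ext_iff]
      split_ifs <;> (try norm_num) <;> (try simp only [and_true, true_and, not_true, not_false_iff] at *) <;> omega
    · intro b _ hb
      have hbv : b.val ≠ i.val - 1 := fun h => hb (Fin.ext h)
      simp only [ωmat]
      split_ifs <;> (try norm_num) <;> (try simp only [and_true, true_and, not_true, not_false_iff] at *) <;> omega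
    · simp

lemma omega_skew (n : ℕ) : (ωmat n)ᵀ = -(ωmat n) := by
  ext i j
  simp only [Matrix.transpose_apply, Matrix.neg_apply, ωmat]
  split_ifs <;> (try norm_num) <;> (try simp only [and_true, true_and, not_true, not_false_iff] at *) <;> omega

lemma trace_zero {m : ℕ} (J M : Matrix (Fin m) (Fin m) ℝ)
    (hskew : Jᵀ = -J) (hsq : J * J = -1) (hsymp : Jᵀ * M = Mᵀ * J) :
    Matrix.trace (J * Mᵀ * Mᵀ) = 0 := by
  have h1 : Mᵀ * J = -(J * M) := by rw [← hsymp, hskew]; simp [Matrix.neg_mul]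
  have hMT : Mᵀ = J * M * J := by
    have h2 : Mᵀ * (J * J) = -(J * M) * J := by
      rw [← Matrix.mul_assoc, h1]
    rw [hsq] at h2
    have h3 : -Mᵀ = -(J * M * J) := by
      calc -Mᵀ = Mᵀ * (-1) := by noncomm_ring
        _ = -(J * M) * J := h2
        _ = -(J * M * J) := by noncomm_ring
    exact neg_inj.mp h3
  have hB : Mᵀ * Mᵀ = -(J * (M * M) * J) := by
    rw [hMT]
    calc J * M * J * (J * M * J) = J * M * (J * J) * (M * J) := by noncomm_ring
      _ = J * M * (-1) * (M * J) := by rw [hsq]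
      _ = -(J * (M * M) * J) := by noncomm_ring
  have key : J * Mᵀ * Mᵀ = M * M * J := by
    calc J * Mᵀ * Mᵀ = J * (Mᵀ * Mᵀ) := by noncomm_ring
      _ = J * -(J * (M * M) * J) := by rw [hB]
      _ = -((J * J) * ((M * M) * J)) := by noncomm_ring
      _ = -((-1) * ((M * M) * J)) := by rw [hsq]
      _ = M * M * J := by noncomm_ring
  have e1 : Matrix.trace (J * Mᵀ * Mᵀ) = Matrix.trace (J * (M * M)) := by
    rw [key]; exact Matrix.trace_mul_comm _ _
  have h4 : (J * Mᵀ * Mᵀ)ᵀ = -(M * M * J) := by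
    rw [Matrix.transpose_mul, Matrix.transpose_mul, Matrix.transpose_transpose, hskew]
    noncomm_ring
  have e2 : Matrix.trace (J * Mᵀ * Mᵀ) = -Matrix.trace (J * (M * M)) := by
    rw [← Matrix.trace_transpose (J * Mᵀ * Mᵀ), h4, Matrix.trace_neg,
      Matrix.trace_mul_comm]
  linarith [e1, e2]

lemma omega_mul_apply_even (n : ℕ) (B : Matrix (Fin (2*n)) (Fin (2*n)) ℝ) (i j : Fin (2*n))
    (he : i.val % 2 = 0) (h : i.val + 1 < 2*n) :
    (ωmat n * B) i j = B ⟨i.val + 1, h⟩ j := by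
  rw [Matrix.mul_apply, Finset.sum_eq_single (⟨i.val + 1, h⟩ : Fin (2*n))]
  · have : ωmat n i ⟨i.val + 1, h⟩ = 1 := by
      unfold ωmat; rw [if_pos ⟨he, rfl⟩]
    rw [this, one_mul]
  · intro b _ hb
    have hbv : b.val ≠ i.val + 1 := fun hh => hb (Fin.ext hh)
    have : ωmat n i b = 0 := by
      unfold ωmat; split_ifs <;> (try rfl) <;> omega
    rw [this, zero_mul]
  · simp

lemma omega_mul_apply_odd (n : ℕ) (B : Matrix (Fin (2*n)) (Fin (2*n)) ℝ) (i j : Fin (2*n))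
    (ho : i.val % 2 = 1) (h : i.val - 1 < 2*n) :
    (ωmat n * B) i j = -B ⟨i.val - 1, h⟩ j := by
  rw [Matrix.mul_apply, Finset.sum_eq_single (⟨i.val - 1, h⟩ : Fin (2*n))]
  · have : ωmat n i ⟨i.val - 1, h⟩ = -1 := by
      unfold ωmat
      rw [if_neg (by omega), if_pos ⟨show (i.val-1)%2=0 by omega, show i.val = (i.val-1)+1 by omega⟩]
    rw [this]; ring
  · intro b _ hb
    have hbv : b.val ≠ i.val - 1 := fun hh => hb (Fin.ext hh)
    have : ωmat n i b = 0 := by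
      unfold ωmat; split_ifs <;> (try rfl) <;> omega
    rw [this, zero_mul]
  · simp

lemma sum_range_pair (g : ℕ → ℝ) (n : ℕ) :
    ∑ i ∈ Finset.range (2*n), g i = ∑ p ∈ Finset.range n, (g (2*p) + g (2*p+1)) := by
  induction n with
  | zero => simp
  | succ n ih =>
      have h2 : 2 * (n+1) = (2*n + 1) + 1 := by omega
      rw [h2, Finset.sum_range_succ, Finset.sum_range_succ, Finset.sum_range_succ, ih]
      ring

lemma sum_fin_pair (n : ℕ) (f : Fin (2*n) → ℝ) :
    ∑ i, f i = ∑ p : Fin n,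
      (f ⟨2*p.val, by have := p.isLt; omega⟩ + f ⟨2*p.val+1, by have := p.isLt; omega⟩) := by
  set g : ℕ → ℝ := fun i => if h : i < 2*n then f ⟨i, h⟩ else 0 with hg
  have h1 : ∑ i, f i = ∑ i ∈ Finset.range (2*n), g i := by
    rw [← Fin.sum_univ_eq_sum_range]
    apply Finset.sum_congr rfl
    intro i _
    simp [hg, i.isLt]
  have h2 : ∑ p : Fin n,
      (f ⟨2*p.val, by have := p.isLt; omega⟩ + f ⟨2*p.val+1, by have := p.isLt; omega⟩)
      = ∑ p ∈ Finset.range n, (g (2*p) + g (2*p+1)) := by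
    rw [← Fin.sum_univ_eq_sum_range (fun p => g (2*p) + g (2*p+1))]
    apply Finset.sum_congr rfl
    intro p _
    have hp1 : 2*p.val < 2*n := by have := p.isLt; omega
    have hp2 : 2*p.val+1 < 2*n := by have := p.isLt; omega
    simp [hg, hp1, hp2]
  rw [h1, h2, sum_range_pair]

lemma trace_omega_mul (n : ℕ) (B : Matrix (Fin (2*n)) (Fin (2*n)) ℝ) :
    Matrix.trace (ωmat n * B) = ∑ p : Fin n,
      (B ⟨2*p.val+1, by have := p.isLt; omega⟩ ⟨2*p.val, by have := p.isLt; omega⟩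
        - B ⟨2*p.val, by have := p.isLt; omega⟩ ⟨2*p.val+1, by have := p.isLt; omega⟩) := by
  rw [Matrix.trace]
  have := sum_fin_pair n (fun i => (ωmat n * B) i i)
  simp only [Matrix.diag_apply]
  rw [this]
  apply Finset.sum_congr rfl
  intro p _
  have hp1 : 2*p.val < 2*n := by have := p.isLt; omega
  have hp2 : 2*p.val+1 < 2*n := by have := p.isLt; omega
  rw [omega_mul_apply_even n B ⟨2*p.val, hp1⟩ _ (by simp [Nat.mul_mod_right]) (by simpa using hp2),
      omega_mul_apply_odd n B ⟨2*p.val+1, hp2⟩ _ (by simp [Nat.add_mod, Nat.mul_mod_right]) (by simp)]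
  simp [sub_eq_add_neg]


def Af (n : ℕ) (i : Fin n) : Fin (2 * n) := ⟨2 * i.val, by have := i.isLt; omega⟩
def Bf (n : ℕ) (i : Fin n) : Fin (2 * n) := ⟨2 * i.val + 1, by have := i.isLt; omega⟩

lemma contDiff_pd {m : ℕ} (f : Euc m → ℝ) (hf : ContDiff ℝ 2 f) (k : Fin m) :
    ContDiff ℝ 1 (pd k f) := by
  have h1 : ContDiff ℝ 1 (fderiv ℝ f) := hf.fderiv_right (m := 1) (by norm_num)
  exact ((ContinuousLinearMap.apply ℝ ℝ (EuclideanSpace.single k 1)).contDiff).comp h1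

lemma sympDiv_eq (n : ℕ) (u : Euc (2*n) → Euc (2*n)) (x : Euc (2*n)) :
    sympDiv n u x = ∑ i : Fin n,
      (pd (Bf n i) (fun y => u y (Af n i)) x - pd (Af n i) (fun y => u y (Bf n i)) x) := rfl

lemma convect_apply {n : ℕ} (u : Euc (2*n) → Euc (2*n)) (y : Euc (2*n)) (j : Fin (2*n)) :
    convect u y j = ∑ k : Fin (2*n), u y k * pd k (fun z => u z j) y := rfl

lemma MtMt_apply (n : ℕ) (u : Euc (2*n) → Euc (2*n)) (x : Euc (2*n)) (a b : Fin (2*n)) :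
    ((jac u x)ᵀ * (jac u x)ᵀ) a b
      = ∑ k : Fin (2*n), pd a (fun y => u y k) x * pd k (fun y => u y b) x := by
  rw [Matrix.mul_apply]
  rfl

lemma pd_convect {m : ℕ} (u : Euc m → Euc m) (hreg : ContDiff ℝ 2 u) (a j : Fin m)
    (x : Euc m) :
    pd a (fun y => ∑ k : Fin m, u y k * pd k (fun z => u z j) y) x
    = ∑ k : Fin m, (pd a (fun y => u y k) x * pd k (fun y => u y j) x
          + u x k * pd a (pd k (fun y => u y j)) x) := by
  have hc : ∀ i, ContDiff ℝ 2 (fun y => u y i) := fun i => contDiff_euclidean.mp hreg i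
  have hdu : ∀ i, Differentiable ℝ (fun y => u y i) :=
    fun i => (hc i).differentiable (by norm_num)
  have hdpd : ∀ k i, Differentiable ℝ (pd k (fun y => u y i)) :=
    fun k i => (contDiff_pd _ (hc i) k).differentiable one_ne_zero
  refine (pd_sum Finset.univ a (fun k y => u y k * pd k (fun z => u z j) y) x
      (fun k _ => ((hdu k) x).mul ((hdpd k j) x))).trans ?_
  exact Finset.sum_congr rfl fun k _ => pd_mul a _ _ x ((hdu k) x) ((hdpd k j) x)

lemma trace_formula (n : ℕ) (u : Euc (2*n) → Euc (2*n)) (x : Euc (2*n)) :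
    Matrix.trace (ωmat n * (jac u x)ᵀ * (jac u x)ᵀ)
      = ∑ i : Fin n, ∑ k : Fin (2*n),
        (pd (Bf n i) (fun y => u y k) x * pd k (fun y => u y (Af n i)) x
          - pd (Af n i) (fun y => u y k) x * pd k (fun y => u y (Bf n i)) x) := by
  rw [Matrix.mul_assoc, trace_omega_mul]
  refine Finset.sum_congr rfl fun p _ => ?_
  rw [MtMt_apply, MtMt_apply, ← Finset.sum_sub_distrib]
  rfl

/-- For a symplectic vector field `u ∈ H^s`, `s > n+1`:
`∇_ω·[(u·∇)u] = (u·∇)(∇_ω·u)`, and the trace term `tr(ω·(du)ᵀ·(du)ᵀ)` vanishes. -/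
theorem stmt8 (n : ℕ) (hn : 1 ≤ n) (s : ℝ) (hs : s > n + 1)
    (u : Euc (2 * n) → Euc (2 * n))
    (hreg : ContDiff ℝ 2 u) (hsob : sobNormV s u ≠ ∞) (hsymp : IsSymp n u) :
    ∀ x, sympDiv n (fun y => convect u y) x
          = (∑ k : Fin (2 * n), u x k * pd k (fun y => sympDiv n u y) x)
        ∧ Matrix.trace (ωmat n * (jac u x)ᵀ * (jac u x)ᵀ) = 0 := by
  intro x
  classical
  have htr0 : Matrix.trace (ωmat n * (jac u x)ᵀ * (jac u x)ᵀ) = 0 :=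
    trace_zero (ωmat n) (jac u x) (omega_skew n) (omega_sq n) (hsymp x)
  refine ⟨?_, htr0⟩
  have hc : ∀ i : Fin (2*n), ContDiff ℝ 2 (fun y => u y i) :=
    fun i => contDiff_euclidean.mp hreg i
  have hdu : ∀ i, Differentiable ℝ (fun y : Euc (2*n) => u y i) :=
    fun i => (hc i).differentiable (by norm_num)
  have hdpd : ∀ (k i : Fin (2*n)), Differentiable ℝ (pd k (fun y => u y i)) :=
    fun k i => (contDiff_pd _ (hc i) k).differentiable one_ne_zero
  have hLHS : sympDiv n (fun y => convect u y) x
      = ∑ i : Fin n, (∑ k : Fin (2*n),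
          (pd (Bf n i) (fun y => u y k) x * pd k (fun y => u y (Af n i)) x
            + u x k * pd (Bf n i) (pd k (fun y => u y (Af n i))) x)
        - ∑ k : Fin (2*n),
          (pd (Af n i) (fun y => u y k) x * pd k (fun y => u y (Bf n i)) x
            + u x k * pd (Af n i) (pd k (fun y => u y (Bf n i))) x)) := by
    rw [sympDiv_eq]
    refine Finset.sum_congr rfl fun i _ => ?_
    have e1 : pd (Bf n i) (fun y => (fun z => convect u z) y (Af n i)) x
        = pd (Bf n i) (fun y => ∑ k : Fin (2*n), u y k * pd k (fun z => u z (Af n i)) y) x := rfl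
    have e2 : pd (Af n i) (fun y => (fun z => convect u z) y (Bf n i)) x
        = pd (Af n i) (fun y => ∑ k : Fin (2*n), u y k * pd k (fun z => u z (Bf n i)) y) x := rfl
    rw [e1, e2, pd_convect u hreg, pd_convect u hreg]
  have hRHS : ∀ k : Fin (2*n), pd k (fun y => sympDiv n u y) x
      = ∑ i : Fin n, (pd k (pd (Bf n i) (fun y => u y (Af n i))) x
          - pd k (pd (Af n i) (fun y => u y (Bf n i))) x) := by
    intro k
    have e0 : (fun y => sympDiv n u y)
        = fun y => ∑ i : Fin n, (pd (Bf n i) (fun z => u z (Af n i)) y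
            - pd (Af n i) (fun z => u z (Bf n i)) y) := rfl
    rw [e0]
    refine (pd_sum Finset.univ k
        (fun i y => pd (Bf n i) (fun z => u z (Af n i)) y
          - pd (Af n i) (fun z => u z (Bf n i)) y) x
        (fun i _ => ((hdpd (Bf n i) (Af n i)) x).sub ((hdpd (Af n i) (Bf n i)) x))).trans ?_
    refine Finset.sum_congr rfl fun i _ => ?_
    exact pd_sub k _ _ x ((hdpd (Bf n i) (Af n i)) x) ((hdpd (Af n i) (Bf n i)) x)
  have hswap : ∀ (a k : Fin (2*n)) (j : Fin (2*n)),
      pd a (pd k (fun y => u y j)) x = pd k (pd a (fun y => u y j)) x := by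
    intro a k j
    exact pd_swap (fun y => u y j) (contDiff_euclidean.mp hreg j) a k x
  rw [hLHS]
  have htr := trace_formula n u x
  rw [htr0] at htr
  calc ∑ i : Fin n, (∑ k : Fin (2*n),
          (pd (Bf n i) (fun y => u y k) x * pd k (fun y => u y (Af n i)) x
            + u x k * pd (Bf n i) (pd k (fun y => u y (Af n i))) x)
        - ∑ k : Fin (2*n),
          (pd (Af n i) (fun y => u y k) x * pd k (fun y => u y (Bf n i)) x
            + u x k * pd (Af n i) (pd k (fun y => u y (Bf n i))) x))
      = ∑ i : Fin n, (∑ k : Fin (2*n),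
          (pd (Bf n i) (fun y => u y k) x * pd k (fun y => u y (Af n i)) x
            - pd (Af n i) (fun y => u y k) x * pd k (fun y => u y (Bf n i)) x)
        + ∑ k : Fin (2*n), u x k *
          (pd k (pd (Bf n i) (fun y => u y (Af n i))) x
            - pd k (pd (Af n i) (fun y => u y (Bf n i))) x)) := by
        refine Finset.sum_congr rfl fun i _ => ?_
        rw [← Finset.sum_sub_distrib, ← Finset.sum_add_distrib]
        refine Finset.sum_congr rfl fun k _ => ?_
        rw [hswap (Bf n i) k (Af n i), hswap (Af n i) k (Bf n i)]
        ring
    _ = (∑ i : Fin n, ∑ k : Fin (2*n),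
          (pd (Bf n i) (fun y => u y k) x * pd k (fun y => u y (Af n i)) x
            - pd (Af n i) (fun y => u y k) x * pd k (fun y => u y (Bf n i)) x))
        + ∑ i : Fin n, ∑ k : Fin (2*n), u x k *
          (pd k (pd (Bf n i) (fun y => u y (Af n i))) x
            - pd k (pd (Af n i) (fun y => u y (Bf n i))) x) := by
        rw [← Finset.sum_add_distrib]
    _ = ∑ i : Fin n, ∑ k : Fin (2*n), u x k *
          (pd k (pd (Bf n i) (fun y => u y (Af n i))) x
            - pd k (pd (Af n i) (fun y => u y (Bf n i))) x) := by
        rw [← htr]; ring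
    _ = ∑ k : Fin (2*n), u x k * ∑ i : Fin n,
          (pd k (pd (Bf n i) (fun y => u y (Af n i))) x
            - pd k (pd (Af n i) (fun y => u y (Bf n i))) x) := by
        rw [Finset.sum_comm]
        exact Finset.sum_congr rfl fun k _ => (Finset.mul_sum _ _ _).symm
    _ = ∑ k : Fin (2*n), u x k * pd k (fun y => sympDiv n u y) x :=
        Finset.sum_congr rfl fun k _ => by rw [hRHS k]
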